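/- The graded Jacobi identities of the contact Lie superalgebra K(1,1;n) = W(1;n) ⊕ O_(div) hold: (i) for all f, x, y ∈ O(1;n), ∂(f · x) · y + x · ∂(f · y) = f · ∂(x · y) − ∂(f) · x · y (compatibility of the even–odd action with the odd–odd bracket [x,y] = −x·y·∂; this identity requires characteristic 3); and (ii) for all x, y, z ∈ O(1;n), ∂(x·y·z) + ∂(y·z·x) + ∂(z·x·y) = 0 (the super-Jacobi identity on three odd elements). -/

import Mathlib

/-- The product of the divided power algebra `O(1;n)`, written in coordinates with
respect to the basis `e_0, …, e_{3^n - 1}`: it is the bilinear product determined by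
`e_i · e_j = binom(i+j, i) e_{i+j}`, where `e_k = 0` for `k ≥ 3^n`. -/
def omul (Φ : Type*) [Field Φ] (n : ℕ) (f g : Fin (3 ^ n) → Φ) : Fin (3 ^ n) → Φ :=
  fun k => ∑ i : Fin (3 ^ n), ∑ j : Fin (3 ^ n),
    if (i : ℕ) + (j : ℕ) = (k : ℕ)
    then (((i : ℕ) + (j : ℕ)).choose (i : ℕ) : Φ) * f i * g j
    else 0

/-- The basis element `e_i` of `O(1;n)`. -/
def eb (Φ : Type*) [Field Φ] (n : ℕ) (i : Fin (3 ^ n)) : Fin (3 ^ n) → Φ :=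
  Pi.single i 1

/-- The linear map `∂` on `O(1;n)`, with `∂ e_0 = 0` and `∂ e_i = e_{i-1}`;
in coordinates, `(∂ f)_k = f_{k+1}` (interpreted as `0` when `k + 1 ≥ 3^n`). -/
def odel (Φ : Type*) [Field Φ] (n : ℕ) (f : Fin (3 ^ n) → Φ) : Fin (3 ^ n) → Φ :=
  fun k => if h : (k : ℕ) + 1 < 3 ^ n then f ⟨(k : ℕ) + 1, h⟩ else 0

section Aux

variable {Φ : Type*} [Field Φ] {n : ℕ}

/-- Extension of a coordinate vector to all of `ℕ` by zero. -/
def oext {N : ℕ} (f : Fin N → Φ) (m : ℕ) : Φ :=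
  if h : m < N then f ⟨m, h⟩ else 0

lemma oext_lt {N : ℕ} (f : Fin N → Φ) {m : ℕ} (h : m < N) : oext f m = f ⟨m, h⟩ := dif_pos h

lemma oext_ge {N : ℕ} (f : Fin N → Φ) {m : ℕ} (h : N ≤ m) : oext f m = 0 :=
  dif_neg (not_lt.mpr h)

lemma omul_apply (f g : Fin (3 ^ n) → Φ) (k : Fin (3 ^ n)) :
    omul Φ n f g k = ∑ i ∈ Finset.range ((k : ℕ) + 1),
      ((k : ℕ).choose i : Φ) * oext f i * oext g ((k : ℕ) - i) := by
  have h1 : ∀ i : Fin (3 ^ n),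
      (∑ j : Fin (3 ^ n), if (i : ℕ) + (j : ℕ) = (k : ℕ)
        then (((i : ℕ) + (j : ℕ)).choose (i : ℕ) : Φ) * f i * g j else 0) =
      if (i : ℕ) ≤ (k : ℕ)
        then ((k : ℕ).choose (i : ℕ) : Φ) * oext f (i : ℕ) * oext g ((k : ℕ) - (i : ℕ))
        else 0 := by
    intro i
    by_cases h : (i : ℕ) ≤ (k : ℕ)
    · rw [if_pos h]
      have hj : (k : ℕ) - (i : ℕ) < 3 ^ n := lt_of_le_of_lt (Nat.sub_le _ _) k.isLt
      rw [Finset.sum_eq_single (⟨(k : ℕ) - (i : ℕ), hj⟩ : Fin (3 ^ n))]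
      · have hik : (i : ℕ) + ((k : ℕ) - (i : ℕ)) = (k : ℕ) := by omega
        rw [if_pos hik, hik, oext_lt f i.isLt, oext_lt g hj]
      · intro j _ hne
        apply if_neg
        intro hc
        apply hne
        apply Fin.ext
        simp only
        omega
      · intro hmem; exact absurd (Finset.mem_univ _) hmem
    · rw [if_neg h]
      apply Finset.sum_eq_zero
      intro j _
      apply if_neg
      omega
  rw [omul]
  rw [Finset.sum_congr rfl (fun i _ => h1 i)]
  rw [Fin.sum_univ_eq_sum_range (fun m => if m ≤ (k : ℕ)
    then ((k : ℕ).choose m : Φ) * oext f m * oext g ((k : ℕ) - m) else 0)]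
  rw [← Finset.sum_subset (Finset.range_subset_range.mpr k.isLt)]
  · exact Finset.sum_congr rfl
      (fun m hm => if_pos (by simpa using Nat.lt_succ_iff.mp (Finset.mem_range.mp hm)))
  · intro m _ hm
    exact if_neg (by simp only [Finset.mem_range] at hm; omega)

lemma oext_omul (f g : Fin (3 ^ n) → Φ) {m : ℕ} (h : m < 3 ^ n) :
    oext (omul Φ n f g) m = ∑ i ∈ Finset.range (m + 1),
      (m.choose i : Φ) * oext f i * oext g (m - i) := by
  rw [oext_lt _ h, omul_apply]

lemma omul_comm (f g : Fin (3 ^ n) → Φ) : omul Φ n f g = omul Φ n g f := by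
  funext k
  rw [omul_apply, omul_apply, ← Finset.sum_range_reflect]
  refine Finset.sum_congr rfl fun j hj => ?_
  rw [Finset.mem_range] at hj
  have hj' : j ≤ (k : ℕ) := by omega
  have e1 : (k : ℕ) + 1 - 1 - j = (k : ℕ) - j := by omega
  rw [e1, Nat.choose_symm hj', Nat.sub_sub_self hj']
  ring

lemma omul_assoc (f g h : Fin (3 ^ n) → Φ) :
    omul Φ n (omul Φ n f g) h = omul Φ n f (omul Φ n g h) := by
  funext k
  rw [omul_apply, omul_apply]
  have hL : ∀ i ∈ Finset.range ((k : ℕ) + 1),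
      ((k : ℕ).choose i : Φ) * oext (omul Φ n f g) i * oext h ((k : ℕ) - i)
      = ∑ a ∈ Finset.range (i + 1),
          ((k : ℕ).choose i : Φ) * (i.choose a : Φ) * oext f a * oext g (i - a)
            * oext h ((k : ℕ) - i) := by
    intro i hi
    rw [Finset.mem_range] at hi
    rw [oext_omul f g (lt_of_le_of_lt (by omega : i ≤ (k : ℕ)) k.isLt)]
    rw [Finset.mul_sum, Finset.sum_mul]
    exact Finset.sum_congr rfl fun a _ => by ring
  have hR : ∀ a ∈ Finset.range ((k : ℕ) + 1),
      ((k : ℕ).choose a : Φ) * oext f a * oext (omul Φ n g h) ((k : ℕ) - a)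
      = ∑ b ∈ Finset.range ((k : ℕ) - a + 1),
          ((k : ℕ).choose a : Φ) * (((k : ℕ) - a).choose b : Φ) * oext f a * oext g b
            * oext h ((k : ℕ) - a - b) := by
    intro a _
    rw [oext_omul g h (lt_of_le_of_lt (Nat.sub_le _ _) k.isLt)]
    rw [Finset.mul_sum]
    exact Finset.sum_congr rfl fun b _ => by ring
  rw [Finset.sum_congr rfl hL, Finset.sum_congr rfl hR, Finset.sum_sigma', Finset.sum_sigma']
  refine Finset.sum_nbij' (fun p => ⟨p.2, p.1 - p.2⟩) (fun q => ⟨q.1 + q.2, q.1⟩) ?_ ?_ ?_ ?_ ?_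
  · intro p hp
    simp only [Finset.mem_sigma, Finset.mem_range] at hp ⊢
    omega
  · intro q hq
    simp only [Finset.mem_sigma, Finset.mem_range] at hq ⊢
    omega
  · intro p hp
    simp only [Finset.mem_sigma, Finset.mem_range] at hp
    obtain ⟨i, a⟩ := p
    simp only at hp ⊢
    have : a + (i - a) = i := by omega
    simp [this]
  · intro q hq
    simp only [Finset.mem_sigma, Finset.mem_range] at hq
    obtain ⟨a, b⟩ := q
    simp only at hq ⊢
    have : a + b - a = b := by omega
    simp [this]
  · intro p hp
    simp only [Finset.mem_sigma, Finset.mem_range] at hp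
    obtain ⟨i, a⟩ := p
    simp only at hp ⊢
    have h1 : (k : ℕ) - a - (i - a) = (k : ℕ) - i := by omega
    have hc : ((k : ℕ).choose i * i.choose a : ℕ)
        = (k : ℕ).choose a * ((k : ℕ) - a).choose (i - a) :=
      Nat.choose_mul (by omega)
    have hc' : ((k : ℕ).choose i : Φ) * (i.choose a : Φ)
        = ((k : ℕ).choose a : Φ) * (((k : ℕ) - a).choose (i - a) : Φ) := by
      exact_mod_cast congrArg (Nat.cast : ℕ → Φ) hc
    rw [h1]
    linear_combination (oext f a * oext g (i - a) * oext h ((k : ℕ) - i)) * hc'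

lemma omul_left_comm (f g h : Fin (3 ^ n) → Φ) :
    omul Φ n f (omul Φ n g h) = omul Φ n g (omul Φ n f h) := by
  rw [← omul_assoc, omul_comm f g, omul_assoc]

lemma oext_odel (f : Fin (3 ^ n) → Φ) (m : ℕ) :
    oext (odel Φ n f) m = oext f (m + 1) := by
  by_cases h : m < 3 ^ n
  · rw [oext_lt _ h]
    show (if h' : m + 1 < 3 ^ n then f ⟨m + 1, h'⟩ else 0) = _
    by_cases h' : m + 1 < 3 ^ n
    · rw [dif_pos h', oext_lt f h']
    · rw [dif_neg h', oext_ge f (by omega)]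
  · rw [oext_ge _ (by omega), oext_ge f (by omega)]

/-- In characteristic 3, `∂` is a derivation of the (truncated) divided power algebra. -/
lemma odel_omul [CharP Φ 3] (f g : Fin (3 ^ n) → Φ) :
    odel Φ n (omul Φ n f g) = omul Φ n (odel Φ n f) g + omul Φ n f (odel Φ n g) := by
  funext k
  set K := (k : ℕ) with hK
  have key : omul Φ n (odel Φ n f) g k + omul Φ n f (odel Φ n g) k
      = ∑ i ∈ Finset.range K, ((K + 1).choose (i + 1) : Φ) * oext f (i + 1) * oext g (K - i)
        + oext f (K + 1) * oext g 0 + oext f 0 * oext g (K + 1) := by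
    rw [omul_apply, omul_apply]
    have hS1 : ∑ i ∈ Finset.range (K + 1),
          (K.choose i : Φ) * oext (odel Φ n f) i * oext g (K - i)
        = ∑ i ∈ Finset.range K, (K.choose i : Φ) * oext f (i + 1) * oext g (K - i)
          + oext f (K + 1) * oext g 0 := by
      rw [Finset.sum_range_succ]
      simp only [oext_odel]
      rw [Nat.choose_self, Nat.sub_self, Nat.cast_one, one_mul]
    have hS2 : ∑ i ∈ Finset.range (K + 1),
          (K.choose i : Φ) * oext f i * oext (odel Φ n g) (K - i)
        = ∑ i ∈ Finset.range K, (K.choose (i + 1) : Φ) * oext f (i + 1) * oext g (K - i)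
          + oext f 0 * oext g (K + 1) := by
      rw [Finset.sum_range_succ']
      simp only [oext_odel]
      congr 1
      · refine Finset.sum_congr rfl fun i hi => ?_
        rw [Finset.mem_range] at hi
        have e : K - (i + 1) + 1 = K - i := by omega
        rw [e]
      · rw [Nat.choose_zero_right, Nat.sub_zero, Nat.cast_one, one_mul]
    rw [hS1, hS2]
    have hP : ∑ i ∈ Finset.range K, (K.choose i : Φ) * oext f (i + 1) * oext g (K - i)
         + ∑ i ∈ Finset.range K, (K.choose (i + 1) : Φ) * oext f (i + 1) * oext g (K - i)
         = ∑ i ∈ Finset.range K,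
             ((K + 1).choose (i + 1) : Φ) * oext f (i + 1) * oext g (K - i) := by
      rw [← Finset.sum_add_distrib]
      refine Finset.sum_congr rfl fun i _ => ?_
      rw [Nat.choose_succ_succ, Nat.cast_add]
      ring
    linear_combination hP
  rw [Pi.add_apply, key]
  by_cases h : K + 1 < 3 ^ n
  · rw [show odel Φ n (omul Φ n f g) k = omul Φ n f g ⟨K + 1, h⟩ from dif_pos h]
    rw [omul_apply]
    have e0 : ((⟨K + 1, h⟩ : Fin (3 ^ n)) : ℕ) = K + 1 := rfl
    rw [e0, Finset.sum_range_succ', Finset.sum_range_succ]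
    simp only [Nat.succ_sub_succ, Nat.choose_self, Nat.choose_zero_right, Nat.sub_self,
      Nat.sub_zero, Nat.cast_one, one_mul]
  · rw [show odel Φ n (omul Φ n f g) k = 0 from dif_neg h]
    have hKN : K + 1 = 3 ^ n := by have := k.isLt; omega
    have h1 : oext f (K + 1) = 0 := oext_ge f (by omega)
    have h2 : oext g (K + 1) = 0 := oext_ge g (by omega)
    have h3 : ∀ i ∈ Finset.range K,
        ((K + 1).choose (i + 1) : Φ) * oext f (i + 1) * oext g (K - i) = 0 := by
      intro i hi
      rw [Finset.mem_range] at hi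
      have hdvd : (3 : ℕ) ∣ (K + 1).choose (i + 1) := by
        rw [hKN]
        exact Nat.Prime.dvd_choose_pow Nat.prime_three (by omega) (by omega)
      have hz : (((K + 1).choose (i + 1) : ℕ) : Φ) = 0 :=
        (CharP.cast_eq_zero_iff Φ 3 _).mpr hdvd
      rw [hz, zero_mul, zero_mul]
    rw [Finset.sum_eq_zero h3, h1, h2]
    ring

lemma omul_add_left (f g h : Fin (3 ^ n) → Φ) :
    omul Φ n (f + g) h = omul Φ n f h + omul Φ n g h := by
  funext k
  simp only [omul, Pi.add_apply]
  rw [← Finset.sum_add_distrib]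
  refine Finset.sum_congr rfl fun i _ => ?_
  rw [← Finset.sum_add_distrib]
  refine Finset.sum_congr rfl fun j _ => ?_
  split_ifs <;> ring

lemma omul_add_right (f g h : Fin (3 ^ n) → Φ) :
    omul Φ n f (g + h) = omul Φ n f g + omul Φ n f h := by
  rw [omul_comm, omul_add_left, omul_comm g f, omul_comm h f]

lemma three_nil [CharP Φ 3] (v : Fin (3 ^ n) → Φ) : v + v + v = 0 := by
  funext k
  have h3 : (3 : Φ) = 0 := by exact_mod_cast CharP.cast_eq_zero Φ 3
  show v k + v k + v k = 0
  linear_combination (v k) * h3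

end Aux

/-- The graded Jacobi identities of the contact Lie superalgebra
`K(1,1;n) = W(1;n) ⊕ O_(div)` (even part `W(1;n)` acting by `f∂ · g = ∂(f·g)`, odd-odd
bracket `[x,y] = −x·y·∂`): (i) `∂(f·x)·y + x·∂(f·y) = f·∂(x·y) − ∂(f)·x·y` for all
`f, x, y ∈ O(1;n)` (this uses characteristic 3); and (ii)
`∂(x·y·z) + ∂(y·z·x) + ∂(z·x·y) = 0` for all `x, y, z ∈ O(1;n)`. -/
theorem contact_super_jacobi (Φ : Type*) [Field Φ] [CharP Φ 3] (n : ℕ) (hn : 1 ≤ n) :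
    (∀ f x y : Fin (3 ^ n) → Φ,
      omul Φ n (odel Φ n (omul Φ n f x)) y + omul Φ n x (odel Φ n (omul Φ n f y)) =
        omul Φ n f (odel Φ n (omul Φ n x y)) - omul Φ n (odel Φ n f) (omul Φ n x y)) ∧
    (∀ x y z : Fin (3 ^ n) → Φ,
      odel Φ n (omul Φ n (omul Φ n x y) z) + odel Φ n (omul Φ n (omul Φ n y z) x) +
        odel Φ n (omul Φ n (omul Φ n z x) y) = 0) := by
  constructor
  · intro f x y
    simp only [odel_omul, omul_add_left, omul_add_right, omul_comm, omul_left_comm, omul_assoc]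
    linear_combination three_nil (omul Φ n x (omul Φ n y (odel Φ n f)))
  · intro x y z
    simp only [odel_omul, omul_add_left, omul_add_right, omul_comm, omul_left_comm, omul_assoc]
    linear_combination three_nil (omul Φ n y (omul Φ n z (odel Φ n x)))
      + three_nil (omul Φ n x (omul Φ n z (odel Φ n y)))
      + three_nil (omul Φ n x (omul Φ n y (odel Φ n z)))
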